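/- Let (u_k) be an orthogonal family in a Hilbert space H with ‖u_k‖² = α_k > 0 such that (u_k/√α_k) is an orthonormal basis, and suppose u_k = (I + K) v_k for a bounded operator K with I + K boundedly invertible. Then (I + K)(I + F)(I + K*) = I, where I + F := s-lim ∑_{k≤N} α_k⁻¹ (·, v_k) v_k. -/

import Mathlib

/-- If `u_k = (I + K) v_k` form an orthogonal family with `⟨u_j, u_k⟩ = α_k δ_{jk}`, `α_k > 0`,
whose normalizations form an orthonormal basis (orthogonality plus totality), `I + K` being
boundedly invertible, then `(I + K)(I + F)(I + K*) = I`, where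
`I + F = s-lim ∑_{k≤N} α_k⁻¹ (·, v_k) v_k =: G`. -/
theorem stmt6 {H : Type*} [NormedAddCommGroup H] [InnerProductSpace ℂ H] [CompleteSpace H]
    (K : H →L[ℂ] H) (E : H ≃L[ℂ] H)
    (hE : (E : H →L[ℂ] H) = ContinuousLinearMap.id ℂ H + K)
    (v : ℕ → H) (α : ℕ → ℝ) (hα : ∀ k, 0 < α k)
    (horth : ∀ j k, inner (𝕜 := ℂ) (v j + K (v j)) (v k + K (v k))
      = if j = k then (α k : ℂ) else 0)
    (htotal : (Submodule.span ℂ (Set.range fun k => v k + K (v k))).topologicalClosure = ⊤)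
    (G : H →L[ℂ] H)
    (hG : ∀ x : H, HasSum (fun k => (α k : ℂ)⁻¹ • (inner (𝕜 := ℂ) (v k) x • v k)) (G x)) :
    (ContinuousLinearMap.id ℂ H + K).comp
        (G.comp (ContinuousLinearMap.id ℂ H + ContinuousLinearMap.adjoint K))
      = ContinuousLinearMap.id ℂ H := by
  set u : ℕ → H := fun k => v k + K (v k) with hu
  set e : ℕ → H := fun k => ((Real.sqrt (α k) : ℂ))⁻¹ • u k with he
  have hkey : ∀ k, ((Real.sqrt (α k) : ℂ))⁻¹ * ((Real.sqrt (α k) : ℂ))⁻¹ = ((α k)⁻¹ : ℝ) := by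
    intro k
    rw [← mul_inv, ← Complex.ofReal_mul, Real.mul_self_sqrt (hα k).le, Complex.ofReal_inv]
  have hne : ∀ k, ((Real.sqrt (α k) : ℂ)) ≠ 0 := by
    intro k
    simp [Complex.ofReal_ne_zero, Real.sqrt_ne_zero', hα k]
  have honb : Orthonormal ℂ e := by
    rw [orthonormal_iff_ite]
    intro i j
    simp only [he, hu, inner_smul_left, inner_smul_right, horth i j]
    by_cases h : i = j
    · subst h
      simp only [if_pos rfl, Complex.conj_ofReal, map_inv₀, ← mul_assoc, hkey]
      rw [if_pos trivial, if_pos trivial, ← Complex.ofReal_mul,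
        inv_mul_cancel₀ (hα i).ne', Complex.ofReal_one]
    · simp [h]
  have hspan : Submodule.span ℂ (Set.range e) = Submodule.span ℂ (Set.range u) := by
    apply le_antisymm
    · rw [Submodule.span_le]
      rintro _ ⟨k, rfl⟩
      exact Submodule.smul_mem _ _ (Submodule.subset_span ⟨k, rfl⟩)
    · rw [Submodule.span_le]
      rintro _ ⟨k, rfl⟩
      have : u k = (Real.sqrt (α k) : ℂ) • e k := by
        rw [he]; simp [smul_smul, mul_inv_cancel₀ (hne k)]
      rw [this]
      exact Submodule.smul_mem _ _ (Submodule.subset_span ⟨k, rfl⟩)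
  have hdense : ⊤ ≤ (Submodule.span ℂ (Set.range e)).topologicalClosure := by
    rw [hspan, htotal]
  let b : HilbertBasis ℕ ℂ H := HilbertBasis.mk honb hdense
  have hbk : ∀ k, b k = e k := fun k => congrFun (HilbertBasis.coe_mk honb hdense) k
  ext x
  simp only [ContinuousLinearMap.comp_apply, ContinuousLinearMap.add_apply,
    ContinuousLinearMap.id_apply]
  set y : H := x + ContinuousLinearMap.adjoint K x with hy
  have h1 : HasSum (fun k => (α k : ℂ)⁻¹ • (inner (𝕜 := ℂ) (v k) y • v k)) (G y) := hG y
  have h2 := h1.mapL (ContinuousLinearMap.id ℂ H + K)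
  have hinner : ∀ k, inner (𝕜 := ℂ) (v k) y = inner (𝕜 := ℂ) (u k) x := by
    intro k
    have hyE : y = ContinuousLinearMap.adjoint (E : H →L[ℂ] H) x := by
      rw [hy, hE, map_add, ContinuousLinearMap.adjoint_id]
      simp
    rw [hyE, ContinuousLinearMap.adjoint_inner_right, hE]
    simp [hu, inner_add_left]
  have h3 : HasSum (fun k => (α k : ℂ)⁻¹ • (inner (𝕜 := ℂ) (u k) x • u k))
      ((ContinuousLinearMap.id ℂ H + K) (G y)) := by
    convert h2 using 2 with k
    simp [hinner k, hu]
  have h4 : HasSum (fun k => (α k : ℂ)⁻¹ • (inner (𝕜 := ℂ) (u k) x • u k)) x := by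
    have hs := b.hasSum_repr x
    convert hs using 2 with k
    show (α k : ℂ)⁻¹ • (inner (𝕜 := ℂ) (u k) x • u k) = b.repr x k • b k
    rw [b.repr_apply_apply, hbk k, he]
    simp only [inner_smul_left, Complex.conj_ofReal, map_inv₀, smul_smul]
    congr 1
    rw [mul_right_comm, hkey k]
    push_cast
    ring
  have := h3.unique h4
  simpa using this
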